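/- Let K be a field, n ≥ 3, and let u_1, …, u_n, v_1, …, v_n, w_1, …, w_n, be vectors in K^n. For nonnegative integers p, q, r with p + q + r = n, let Θ(p,q,r) denote the determinant of the n×n matrix with columns u_1, …, u_p, v_1, …, v_q, w_1, …, w_r, and let Θ'(p,q,r) denote the determinant of the n×n matrix with columns v_1, …, v_p, w_1, …, w_q, u_1, …, u_r. Let a, b, c ≥ 1 with a + b + c = n and assume that the six determinants Θ(a−1,b,c+1), Θ(a,b+1,c−1), Θ(a+1,b−1,c), Θ'(b−1,c,a+1), Θ'(b,c+1,a−1), Θ'(b+1,c−1,a) are nonzero. Then (Θ(a+1,b,c−1)/Θ(a−1,b,c+1)) · (Θ(a,b−1,c+1)/Θ(a,b+1,c−1)) · (Θ(a−1,b+1,c)/Θ(a+1,b−1,c)) = (Θ'(b+1,c,a−1)/Θ'(b−1,c,a+1)) · (Θ'(b,c−1,a+1)/Θ'(b,c+1,a−1)) · (Θ'(b−1,c+1,a)/Θ'(b+1,c−1,a)). (This expresses the identity T_{abc}(E,F,G) = T_{bca}(F,G,E) between triple ratios of flags spanned by the u's, v's, w's.) -/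

import Mathlib

/-- `Theta u v w p q` is the determinant of the `n×n` matrix whose columns are
`u 0, …, u (p-1), v 0, …, v (q-1), w 0, …, w (n-p-q-1)` (0-based), i.e. the first `p`
of the `u`'s, then the first `q` of the `v`'s, then the remaining columns from the `w`'s. -/
def Theta {K : Type*} [Field K] {n : ℕ} (u v w : Fin n → Fin n → K) (p q : ℕ) : K :=
  (Matrix.of fun i j : Fin n =>
    if (j : ℕ) < p then u j i
    else if (j : ℕ) < p + q then
      v ⟨(j : ℕ) - p, Nat.lt_of_le_of_lt (Nat.sub_le _ _) j.isLt⟩ i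
    else
      w ⟨(j : ℕ) - p - q,
        Nat.lt_of_le_of_lt (Nat.le_trans (Nat.sub_le _ _) (Nat.sub_le _ _)) j.isLt⟩ i).det

/-- The identity `T_{abc}(E,F,G) = T_{bca}(F,G,E)` between triple ratios, in coordinates:
with `Θ(p,q,r) = Theta u v w p q` and `Θ'(p,q,r) = Theta v w u p q` (so `r = n - p - q`),
assuming the six denominators are nonzero. -/
lemma rot_val {m : ℕ} (r : ℕ) (j : Fin (m+1)) :
    ((((finRotate (m+1)) ^ r) j : Fin (m+1)) : ℕ) = ((j : ℕ) + r) % (m+1) := by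
  induction r with
  | zero => simp [Nat.mod_eq_of_lt j.isLt]
  | succ r ih =>
    have h1 : ((finRotate (m+1)) ^ (r+1)) j = ((finRotate (m+1)) ^ r) j + 1 := by
      rw [pow_succ', Equiv.Perm.mul_apply, finRotate_succ_apply]
    rw [h1, Fin.val_add, ih, Fin.val_one', ← Nat.add_mod]
    ring_nf
lemma theta_cyc {K : Type*} [Field K] {m : ℕ} (u v w : Fin (m+1) → Fin (m+1) → K)
    (p q r : ℕ) (h : p + q + r = m + 1) :
    Theta v w u p q = ((-1 : K) ^ m) ^ r * Theta u v w r p := by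
  have key : (Matrix.of fun i j : Fin (m+1) =>
      if (j : ℕ) < p then v j i
      else if (j : ℕ) < p + q then
        w ⟨(j : ℕ) - p, Nat.lt_of_le_of_lt (Nat.sub_le _ _) j.isLt⟩ i
      else
        u ⟨(j : ℕ) - p - q,
          Nat.lt_of_le_of_lt (Nat.le_trans (Nat.sub_le _ _) (Nat.sub_le _ _)) j.isLt⟩ i) =
      (Matrix.of fun i j : Fin (m+1) =>
      if (j : ℕ) < r then u j i
      else if (j : ℕ) < r + p then
        v ⟨(j : ℕ) - r, Nat.lt_of_le_of_lt (Nat.sub_le _ _) j.isLt⟩ i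
      else
        w ⟨(j : ℕ) - r - p,
          Nat.lt_of_le_of_lt (Nat.le_trans (Nat.sub_le _ _) (Nat.sub_le _ _)) j.isLt⟩ i).submatrix
        id ((finRotate (m+1)) ^ r) := by
    ext i j
    simp only [Matrix.submatrix_apply, Matrix.of_apply, id]
    have hval : ((((finRotate (m+1)) ^ r) j : Fin (m+1)) : ℕ) = ((j : ℕ) + r) % (m+1) :=
      rot_val r j
    have hj := j.isLt
    rcases lt_or_ge (j : ℕ) p with hp | hp
    · have hv : ((((finRotate (m+1)) ^ r) j : Fin (m+1)) : ℕ) = (j : ℕ) + r := by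
        rw [hval]; exact Nat.mod_eq_of_lt (by omega)
      rw [if_pos hp, if_neg (by omega), if_pos (by omega)]
      congr 1; ext; simp only [Fin.val_mk]; omega
    · rcases lt_or_ge (j : ℕ) (p + q) with hq | hq
      · have hv : ((((finRotate (m+1)) ^ r) j : Fin (m+1)) : ℕ) = (j : ℕ) + r := by
          rw [hval]; exact Nat.mod_eq_of_lt (by omega)
        rw [if_neg (by omega), if_pos hq, if_neg (by omega), if_neg (by omega)]
        congr 1; ext; simp only [Fin.val_mk]; omega
      · have hv : ((((finRotate (m+1)) ^ r) j : Fin (m+1)) : ℕ) = (j : ℕ) + r - (m+1) := by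
          rw [hval, Nat.mod_eq_sub_mod (by omega), Nat.mod_eq_of_lt (by omega)]
        rw [if_neg (by omega), if_neg (by omega), if_pos (by omega)]
        congr 1; ext; simp only [Fin.val_mk]; omega
  unfold Theta
  rw [key, Matrix.det_permute']
  have hs : ((Equiv.Perm.sign ((finRotate (m+1)) ^ r) : ℤˣ) : K) = ((-1 : K) ^ m) ^ r := by
    rw [map_pow, sign_finRotate]
    push_cast
    ring
  rw [hs]

theorem tripleRatio_cyclic_invariance
    {K : Type*} [Field K] {n : ℕ} (hn : 3 ≤ n)
    (u v w : Fin n → Fin n → K)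
    (a b c : ℕ) (ha : 1 ≤ a) (hb : 1 ≤ b) (hc : 1 ≤ c) (habc : a + b + c = n)
    (h1 : Theta u v w (a - 1) b ≠ 0) (h2 : Theta u v w a (b + 1) ≠ 0)
    (h3 : Theta u v w (a + 1) (b - 1) ≠ 0)
    (h4 : Theta v w u (b - 1) c ≠ 0) (h5 : Theta v w u b (c + 1) ≠ 0)
    (h6 : Theta v w u (b + 1) (c - 1) ≠ 0) :
    (Theta u v w (a + 1) b / Theta u v w (a - 1) b) *
      (Theta u v w a (b - 1) / Theta u v w a (b + 1)) *
      (Theta u v w (a - 1) (b + 1) / Theta u v w (a + 1) (b - 1)) =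
    (Theta v w u (b + 1) c / Theta v w u (b - 1) c) *
      (Theta v w u b (c - 1) / Theta v w u b (c + 1)) *
      (Theta v w u (b - 1) (c + 1) / Theta v w u (b + 1) (c - 1)) := by
  obtain ⟨m, rfl⟩ : ∃ m, n = m + 1 := ⟨n - 1, by omega⟩
  have e1 := theta_cyc u v w (b + 1) c (a - 1) (by omega)
  have e2 := theta_cyc u v w (b - 1) c (a + 1) (by omega)
  have e3 := theta_cyc u v w b (c - 1) (a + 1) (by omega)
  have e4 := theta_cyc u v w b (c + 1) (a - 1) (by omega)
  have e5 := theta_cyc u v w (b - 1) (c + 1) a (by omega)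
  have e6 := theta_cyc u v w (b + 1) (c - 1) a (by omega)
  rw [e1, e2, e3, e4, e5, e6]
  have he : (-1 : K) ^ m ≠ 0 := pow_ne_zero _ (by norm_num)
  field_simp
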